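/- Let ρ = (ρ₁, …, ρ_m) and τ = (τ₁, …, τ_n) be contraction vectors for ℝ^d, suppose some E ∈ D(ρ) and F ∈ D(τ) are Lipschitz equivalent, and let s > 0 be the common Hausdorff dimension, i.e. ρ₁^s + ⋯ + ρ_m^s = 1. Then for every r > s, (ρ₁^r, …, ρ_m^r) and (τ₁^r, …, τ_n^r) are again contraction vectors for ℝ^d, and any E' ∈ D(ρ₁^r, …, ρ_m^r) and F' ∈ D(τ₁^r, …, τ_n^r) are Lipschitz equivalent. -/

import Mathlib

open Set Metric MeasureTheory

noncomputable section

/-- Two subsets of a metric space are Lipschitz equivalent if there is a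
bi-Lipschitz bijection between them. -/
def LipschitzEquivalent {X : Type*} [MetricSpace X] (E F : Set X) : Prop :=
  ∃ (f : X → X) (C : ℝ), 0 < C ∧ Set.BijOn f E F ∧
    ∀ x ∈ E, ∀ y ∈ E,
      C⁻¹ * dist x y ≤ dist (f x) (f y) ∧ dist (f x) (f y) ≤ C * dist x y

/-- `φ` is a similarity with ratio `r`. -/
def IsSimilarity {X : Type*} [MetricSpace X] (r : ℝ) (φ : X → X) : Prop :=
  ∀ x y, dist (φ x) (φ y) = r * dist x y

/-- `ρ = (ρ₁, …, ρ_m)` is a contraction vector for `ℝ^d`. -/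
def IsContractionVector (d m : ℕ) (ρ : Fin m → ℝ) : Prop :=
  (∀ j, ρ j ∈ Set.Ioo (0:ℝ) 1) ∧ ∑ j, ρ j ^ d < 1

/-- `E` is a dust-like self-similar set with contraction vector `ρ`,
i.e. `E ∈ D(ρ)`. -/
def IsDustLike {X : Type*} [MetricSpace X] {m : ℕ} (ρ : Fin m → ℝ) (E : Set X) : Prop :=
  E.Nonempty ∧ IsCompact E ∧
  ∃ φ : Fin m → X → X,
    (∀ j, IsSimilarity (ρ j) (φ j)) ∧
    E = ⋃ j, φ j '' E ∧
    Pairwise fun j k => Disjoint (φ j '' E) (φ k '' E)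
set_option linter.unusedSectionVars false
set_option linter.unusedVariables false
set_option maxHeartbeats 1000000

namespace LipRpowAux


variable {X : Type*} [MetricSpace X] {m n : ℕ}

def wprod (ρ : Fin m → ℝ) (I : List (Fin m)) : ℝ := (I.map ρ).prod

@[simp] lemma wprod_nil (ρ : Fin m → ℝ) : wprod ρ [] = 1 := rfl

@[simp] lemma wprod_cons (ρ : Fin m → ℝ) (j : Fin m) (I : List (Fin m)) :
    wprod ρ (j :: I) = ρ j * wprod ρ I := by simp [wprod]

lemma wprod_append (ρ : Fin m → ℝ) (I J : List (Fin m)) :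
    wprod ρ (I ++ J) = wprod ρ I * wprod ρ J := by simp [wprod]

@[simp] lemma wprod_concat (ρ : Fin m → ℝ) (I : List (Fin m)) (j : Fin m) :
    wprod ρ (I ++ [j]) = wprod ρ I * ρ j := by simp [wprod]

lemma wprod_pos {ρ : Fin m → ℝ} (h : ∀ j, 0 < ρ j) (I : List (Fin m)) : 0 < wprod ρ I := by
  induction I with
  | nil => simp
  | cons j I ih => simpa using mul_pos (h j) ih

lemma wprod_le_one {ρ : Fin m → ℝ} (h0 : ∀ j, 0 < ρ j) (h1 : ∀ j, ρ j ≤ 1) (I : List (Fin m)) :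
    wprod ρ I ≤ 1 := by
  induction I with
  | nil => simp
  | cons j I ih =>
    have := wprod_pos h0 I
    have := h0 j
    have := h1 j
    simp only [wprod_cons]
    nlinarith

lemma wprod_le_pow {ρ : Fin m → ℝ} {c : ℝ} (h0 : ∀ j, 0 < ρ j) (hc : ∀ j, ρ j ≤ c)
    (I : List (Fin m)) : wprod ρ I ≤ c ^ I.length := by
  induction I with
  | nil => simp
  | cons j I ih =>
    have h1 := wprod_pos h0 I
    have h2 := h0 j
    have h3 := hc j
    have hcpos : (0:ℝ) ≤ c := (h2.trans_le h3).le
    have : (0:ℝ) ≤ c ^ I.length := pow_nonneg hcpos _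
    simp only [wprod_cons, List.length_cons, pow_succ]
    calc ρ j * wprod ρ I ≤ c * c ^ I.length :=
          mul_le_mul h3 ih h1.le hcpos
      _ = c ^ I.length * c := mul_comm _ _

lemma wprod_prefix_le {ρ : Fin m → ℝ} (h0 : ∀ j, 0 < ρ j) (h1 : ∀ j, ρ j ≤ 1)
    {I J : List (Fin m)} (h : I <+: J) : wprod ρ J ≤ wprod ρ I := by
  obtain ⟨K, rfl⟩ := h
  rw [wprod_append]
  have := wprod_pos h0 I
  have := wprod_le_one h0 h1 K
  have := wprod_pos h0 K
  nlinarith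

lemma wprod_rpow {ρ : Fin m → ℝ} (h0 : ∀ j, 0 < ρ j) (r : ℝ) (I : List (Fin m)) :
    wprod (fun j => ρ j ^ r) I = wprod ρ I ^ r := by
  induction I with
  | nil => simp
  | cons j I ih =>
    simp only [wprod_cons, ih]
    rw [← Real.mul_rpow (h0 j).le (wprod_pos h0 I).le]

/-! ### Initial segments of codes -/

def seg (x : ℕ → Fin m) (k : ℕ) : List (Fin m) := (List.range k).map x

@[simp] lemma seg_zero (x : ℕ → Fin m) : seg x 0 = [] := rfl

lemma seg_succ (x : ℕ → Fin m) (k : ℕ) : seg x (k + 1) = seg x k ++ [x k] := by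
  simp [seg, List.range_succ]

@[simp] lemma seg_length (x : ℕ → Fin m) (k : ℕ) : (seg x k).length = k := by simp [seg]

lemma seg_prefix (x : ℕ → Fin m) {k l : ℕ} (h : k ≤ l) : seg x k <+: seg x l := by
  induction l with
  | zero => simp at h; simp [h]
  | succ l ih =>
    rcases Nat.lt_or_ge k (l+1) with h'|h'
    · have := ih (Nat.lt_succ_iff.mp h')
      exact this.trans (by rw [seg_succ]; exact List.prefix_append _ _)
    · have : k = l + 1 := le_antisymm h h'
      simp [this]

lemma seg_eq_of_agree {x y : ℕ → Fin m} {k : ℕ} (h : ∀ i < k, x i = y i) :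
    seg x k = seg y k := by
  unfold seg
  apply List.map_congr_left
  intro a ha
  exact h a (List.mem_range.mp ha)

lemma seg_take {x : ℕ → Fin m} {k l : ℕ} (h : k ≤ l) : (seg x l).take k = seg x k := by
  simp [seg, ← List.map_take, List.take_range, Nat.min_eq_left h]


variable {X : Type*} [MetricSpace X] {m n : ℕ}

/-! ### iterated maps -/

def iterMap (φ : Fin m → X → X) : List (Fin m) → X → X
  | [] => id
  | j :: I => φ j ∘ iterMap φ I

@[simp] lemma iterMap_nil (φ : Fin m → X → X) : iterMap φ [] = id := rfl

lemma iterMap_append (φ : Fin m → X → X) (I J : List (Fin m)) :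
    iterMap φ (I ++ J) = iterMap φ I ∘ iterMap φ J := by
  induction I with
  | nil => rfl
  | cons j I ih => simp [iterMap, ih]; rfl

lemma iterMap_sim {ρ : Fin m → ℝ} {φ : Fin m → X → X} (h : ∀ j, IsSimilarity (ρ j) (φ j))
    (I : List (Fin m)) : IsSimilarity (wprod ρ I) (iterMap φ I) := by
  induction I with
  | nil => intro x y; simp [wprod, iterMap]
  | cons j I ih =>
    intro x y
    simp only [iterMap, Function.comp_apply]
    rw [h j, ih x y, wprod, wprod]
    simp [mul_assoc]

lemma sim_continuous {r : ℝ} {φ : X → X} (h : IsSimilarity r φ) : Continuous φ := by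
  refine (LipschitzWith.of_dist_le_mul (K := r.toNNReal) (fun x y => ?_)).continuous
  rw [h x y]
  have : (r.toNNReal : ℝ) = max r 0 := rfl
  rw [this]
  exact mul_le_mul_of_nonneg_right (le_max_left _ _) dist_nonneg

/-! ### Dust systems -/

structure DS {X : Type*} [MetricSpace X] {m : ℕ} (ρ : Fin m → ℝ) (φ : Fin m → X → X)
    (E : Set X) : Prop where
  pos : ∀ j, 0 < ρ j
  lt1 : ∀ j, ρ j < 1
  sim : ∀ j, IsSimilarity (ρ j) (φ j)
  ne : E.Nonempty
  cpt : IsCompact E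
  dec : E = ⋃ j, φ j '' E
  dis : Pairwise fun j k => Disjoint (φ j '' E) (φ k '' E)

namespace DS

variable {ρ : Fin m → ℝ} {φ : Fin m → X → X} {E : Set X} (h : DS ρ φ E)

lemma finNonempty (h : DS ρ φ E) : Nonempty (Fin m) := by
  by_contra hc
  obtain ⟨e, he⟩ := h.ne
  rw [h.dec] at he
  simp only [Set.mem_iUnion] at he
  obtain ⟨j, _⟩ := he
  exact hc ⟨j⟩

lemma image_sub (h : DS ρ φ E) (j : Fin m) : φ j '' E ⊆ E := by
  conv_rhs => rw [h.dec]
  exact Set.subset_iUnion (fun j => φ j '' E) j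

lemma iter_sub (h : DS ρ φ E) (I : List (Fin m)) : iterMap φ I '' E ⊆ E := by
  induction I with
  | nil => simp
  | cons j I ih =>
    have : iterMap φ (j :: I) '' E = φ j '' (iterMap φ I '' E) := by
      rw [← Set.image_comp]; rfl
    rw [this]
    exact (Set.image_mono ih).trans (h.image_sub j)

lemma cyl_compact (h : DS ρ φ E) (I : List (Fin m)) : IsCompact (iterMap φ I '' E) :=
  h.cpt.image (sim_continuous (iterMap_sim h.sim I))

lemma cyl_ne (h : DS ρ φ E) (I : List (Fin m)) : (iterMap φ I '' E).Nonempty :=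
  h.ne.image _

lemma cyl_nested (h : DS ρ φ E) {I J : List (Fin m)} (hIJ : I <+: J) :
    iterMap φ J '' E ⊆ iterMap φ I '' E := by
  obtain ⟨K, rfl⟩ := hIJ
  rw [iterMap_append, Set.image_comp]
  exact Set.image_mono (h.iter_sub K)

lemma dist_le_cyl (h : DS ρ φ E) {I : List (Fin m)} {u v : X}
    (hu : u ∈ iterMap φ I '' E) (hv : v ∈ iterMap φ I '' E) :
    dist u v ≤ wprod ρ I * diam E := by
  obtain ⟨a, ha, rfl⟩ := hu
  obtain ⟨b, hb, rfl⟩ := hv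
  rw [iterMap_sim h.sim I a b]
  exact mul_le_mul_of_nonneg_left (dist_le_diam_of_mem h.cpt.isBounded ha hb)
    (wprod_pos h.pos I).le

end DS

section
variable {ρ : Fin m → ℝ} {φ : Fin m → X → X} {E : Set X}

lemma rmax_spec (h : DS ρ φ E) : ∃ c : ℝ, 0 ≤ c ∧ c < 1 ∧ ∀ j, ρ j ≤ c := by
  have : Nonempty (Fin m) := h.finNonempty
  have hne : (Finset.univ : Finset (Fin m)).Nonempty := Finset.univ_nonempty
  refine ⟨Finset.univ.sup' hne ρ, ?_, ?_, ?_⟩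
  · obtain ⟨j⟩ := this
    exact (h.pos j).le.trans (Finset.le_sup' ρ (Finset.mem_univ j))
  · exact (Finset.sup'_lt_iff hne).mpr fun j _ => h.lt1 j
  · exact fun j => Finset.le_sup' ρ (Finset.mem_univ j)

lemma exists_pi (h : DS ρ φ E) (x : ℕ → Fin m) :
    (⋂ k, iterMap φ (seg x k) '' E).Nonempty := by
  apply IsCompact.nonempty_iInter_of_sequence_nonempty_isCompact_isClosed
  · intro k
    exact h.cyl_nested (by rw [seg_succ]; exact List.prefix_append _ _)
  · intro k; exact h.cyl_ne _
  · exact h.cyl_compact _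
  · intro k; exact (h.cyl_compact _).isClosed

noncomputable def pi (h : DS ρ φ E) (x : ℕ → Fin m) : X := (exists_pi h x).some

lemma pi_mem (h : DS ρ φ E) (x : ℕ → Fin m) (k : ℕ) :
    pi h x ∈ iterMap φ (seg x k) '' E := by
  have := (exists_pi h x).some_mem
  rw [Set.mem_iInter] at this
  exact this k

lemma pi_mem_base (h : DS ρ φ E) (x : ℕ → Fin m) : pi h x ∈ E := by
  have := pi_mem h x 0
  rw [show seg x 0 = [] from rfl] at this
  simpa using this

lemma dist_pi_le (h : DS ρ φ E) {x y : ℕ → Fin m} {k : ℕ} (hxy : seg x k = seg y k) :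
    dist (pi h x) (pi h y) ≤ wprod ρ (seg x k) * diam E :=
  h.dist_le_cyl (pi_mem h x k) (hxy ▸ pi_mem h y k)

lemma exists_sep (h : DS ρ φ E) :
    ∃ δ : ℝ, 0 < δ ∧ ∀ i j : Fin m, i ≠ j →
      ∀ u ∈ φ i '' E, ∀ v ∈ φ j '' E, δ ≤ dist u v := by
  have hfm : Nonempty (Fin m) := h.finNonempty
  have key : ∀ p : Fin m × Fin m, ∃ δ : ℝ, 0 < δ ∧ (p.1 ≠ p.2 →
      ∀ u ∈ φ p.1 '' E, ∀ v ∈ φ p.2 '' E, δ ≤ dist u v) := by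
    rintro ⟨i, j⟩
    by_cases hij : i = j
    · exact ⟨1, one_pos, fun hne => absurd hij hne⟩
    · have hA : IsCompact (φ i '' E) := h.cpt.image (sim_continuous (h.sim i))
      have hB : IsCompact (φ j '' E) := h.cpt.image (sim_continuous (h.sim j))
      have hAne : (φ i '' E).Nonempty := h.ne.image _
      have hBne : (φ j '' E).Nonempty := h.ne.image _
      obtain ⟨u₀, hu₀, hmin⟩ := hA.exists_isMinOn hAne
        (Metric.continuous_infDist_pt (φ j '' E)).continuousOn
      have hdisj : Disjoint (φ i '' E) (φ j '' E) := h.dis hij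
      have hu₀B : u₀ ∉ φ j '' E := Set.disjoint_left.mp hdisj hu₀
      have hpos : 0 < infDist u₀ (φ j '' E) :=
        (hB.isClosed.notMem_iff_infDist_pos hBne).mp hu₀B
      refine ⟨infDist u₀ (φ j '' E), hpos, fun _ u hu v hv => ?_⟩
      exact (hmin hu).trans (infDist_le_dist_of_mem hv)
  choose δf hδpos hδ using key
  have hune : (Finset.univ : Finset (Fin m × Fin m)).Nonempty := Finset.univ_nonempty
  refine ⟨Finset.univ.inf' hune δf, ?_, ?_⟩
  · exact (Finset.lt_inf'_iff hune).mpr fun p _ => hδpos p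
  · intro i j hij u hu v hv
    exact le_trans (Finset.inf'_le δf (Finset.mem_univ (i, j))) (hδ (i, j) hij u hu v hv)

lemma le_dist_pi (h : DS ρ φ E) {δ : ℝ}
    (hsep : ∀ i j : Fin m, i ≠ j → ∀ u ∈ φ i '' E, ∀ v ∈ φ j '' E, δ ≤ dist u v)
    {x y : ℕ → Fin m} {k : ℕ} (hxy : seg x k = seg y k) (hne : x k ≠ y k) :
    δ * wprod ρ (seg x k) ≤ dist (pi h x) (pi h y) := by
  have hx : pi h x ∈ iterMap φ (seg x k) '' (φ (x k) '' E) := by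
    have := pi_mem h x (k + 1)
    rw [seg_succ, iterMap_append, Set.image_comp] at this
    have e : iterMap φ [x k] '' E = φ (x k) '' E := by
      rw [show iterMap φ [x k] = φ (x k) ∘ id from rfl, Set.image_comp]
      simp
    rwa [e] at this
  have hy : pi h y ∈ iterMap φ (seg x k) '' (φ (y k) '' E) := by
    have this := pi_mem h y (k + 1)
    rw [seg_succ, iterMap_append, Set.image_comp] at this
    have e : iterMap φ [y k] '' E = φ (y k) '' E := by
      rw [show iterMap φ [y k] = φ (y k) ∘ id from rfl, Set.image_comp]
      simp
    rw [e, ← hxy] at this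
    exact this
  obtain ⟨a, ha, hax⟩ := hx
  obtain ⟨b, hb, hby⟩ := hy
  rw [← hax, ← hby, iterMap_sim h.sim (seg x k) a b, mul_comm δ _]
  exact mul_le_mul_of_nonneg_left (hsep (x k) (y k) hne a ha b hb) (wprod_pos h.pos _).le

lemma pi_eq (h : DS ρ φ E) {x : ℕ → Fin m} {e : X}
    (hx : ∀ k, e ∈ iterMap φ (seg x k) '' E) : pi h x = e := by
  obtain ⟨c, hc0, hc1, hcb⟩ := rmax_spec h
  have hk : ∀ k : ℕ, dist (pi h x) e ≤ c ^ k * diam E := by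
    intro k
    refine (h.dist_le_cyl (pi_mem h x k) (hx k)).trans ?_
    refine mul_le_mul_of_nonneg_right ?_ diam_nonneg
    have := wprod_le_pow h.pos hcb (seg x k)
    rwa [seg_length] at this
  have hlim : Filter.Tendsto (fun k : ℕ => c ^ k * diam E) Filter.atTop (nhds 0) := by
    have := (tendsto_pow_atTop_nhds_zero_of_lt_one hc0 hc1).mul_const (diam E)
    simpa using this
  have : dist (pi h x) e ≤ 0 := ge_of_tendsto' hlim hk
  exact dist_le_zero.mp this

lemma exists_code (h : DS ρ φ E) {e : X} (he : e ∈ E) :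
    ∃ x : ℕ → Fin m, ∀ k, e ∈ iterMap φ (seg x k) '' E := by
  have : Nonempty (Fin m) := h.finNonempty
  have step : ∀ I : List (Fin m), e ∈ iterMap φ I '' E →
      ∃ j : Fin m, e ∈ iterMap φ (I ++ [j]) '' E := by
    intro I hI
    obtain ⟨a, ha, rfl⟩ := hI
    have ha' : a ∈ ⋃ j, φ j '' E := h.dec ▸ ha
    rw [Set.mem_iUnion] at ha'
    obtain ⟨j, b, hb, hba⟩ := ha'
    refine ⟨j, ⟨b, hb, ?_⟩⟩
    rw [iterMap_append]
    simp only [Function.comp_apply]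
    rw [show iterMap φ [j] b = φ j b from rfl, hba]
  classical
  let nxt : List (Fin m) → List (Fin m) := fun I =>
    if hI : e ∈ iterMap φ I '' E then I ++ [(step I hI).choose] else I
  let L : ℕ → List (Fin m) := fun k => Nat.rec [] (fun _ I => nxt I) k
  have hL : ∀ k, e ∈ iterMap φ (L k) '' E := by
    intro k
    induction k with
    | zero =>
      show e ∈ iterMap φ [] '' E
      simpa using he
    | succ k ih =>
      show e ∈ iterMap φ (nxt (L k)) '' E
      rw [show nxt (L k) = L k ++ [(step (L k) ih).choose] from dif_pos ih]
      exact (step (L k) ih).choose_spec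
  have hLs : ∀ k, L (k + 1) = L k ++ [(step (L k) (hL k)).choose] := fun k => dif_pos (hL k)
  let j₀ : Fin m := Classical.arbitrary _
  refine ⟨fun k => (L (k + 1)).getLastD j₀, ?_⟩
  have hseg : ∀ k, seg (fun k => (L (k + 1)).getLastD j₀) k = L k := by
    intro k
    induction k with
    | zero => rfl
    | succ k ih =>
      rw [seg_succ, ih, hLs k]
      congr 1
      rw [List.getLastD_concat]
  intro k
  rw [hseg k]
  exact hL k

lemma pi_surj (h : DS ρ φ E) {e : X} (he : e ∈ E) : ∃ x, pi h x = e := by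
  obtain ⟨x, hx⟩ := exists_code h he
  exact ⟨x, pi_eq h hx⟩

lemma firstDiff {x y : ℕ → Fin m} (hne : x ≠ y) :
    ∃ k, seg x k = seg y k ∧ x k ≠ y k := by
  have hex : ∃ k, x k ≠ y k := by
    by_contra hc
    push_neg at hc
    exact hne (funext hc)
  classical
  refine ⟨Nat.find hex, ?_, Nat.find_spec hex⟩
  exact seg_eq_of_agree fun i hi => by
    have := Nat.find_min hex hi
    push_neg at this
    exact this

lemma pi_inj (h : DS ρ φ E) {δ : ℝ} (hδ : 0 < δ)
    (hsep : ∀ i j : Fin m, i ≠ j → ∀ u ∈ φ i '' E, ∀ v ∈ φ j '' E, δ ≤ dist u v) :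
    Function.Injective (pi h) := by
  intro x y hxy
  by_contra hne
  obtain ⟨k, hk, hkne⟩ := firstDiff hne
  have := le_dist_pi h hsep hk hkne
  rw [hxy, dist_self] at this
  have := wprod_pos h.pos (seg x k)
  nlinarith

lemma exists_pair (h : DS ρ φ E) (hm : 2 ≤ m) : ∃ u ∈ E, ∃ v ∈ E, u ≠ v := by
  have h0 : (0 : ℕ) < m := by omega
  have h1 : (1 : ℕ) < m := by omega
  let i : Fin m := ⟨0, h0⟩
  let j : Fin m := ⟨1, h1⟩
  have hij : i ≠ j := by simp [i, j, Fin.ext_iff]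
  obtain ⟨u, hu⟩ := h.ne.image (φ i)
  obtain ⟨v, hv⟩ := h.ne.image (φ j)
  refine ⟨u, h.image_sub i hu, v, h.image_sub j hv, ?_⟩
  intro huv
  exact Set.disjoint_left.mp (h.dis hij) hu (huv ▸ hv)

lemma diam_pos (h : DS ρ φ E) (hm : 2 ≤ m) : 0 < diam E := by
  obtain ⟨u, hu, v, hv, huv⟩ := exists_pair h hm
  exact lt_of_lt_of_le (dist_pos.mpr huv) (dist_le_diam_of_mem h.cpt.isBounded hu hv)

lemma two_le (h : DS ρ φ E) (hpair : ∃ u ∈ E, ∃ v ∈ E, u ≠ v) : 2 ≤ m := by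
  obtain ⟨u, hu, v, hv, huv⟩ := hpair
  by_contra hc
  push_neg at hc
  interval_cases m
  · exact (h.finNonempty).elim fun j => j.elim0
  · -- m = 1 : E = φ 0 '' E, so E is "degenerate"
    have huniq : E = φ 0 '' E := by
      apply Set.Subset.antisymm
      · intro e he
        have he' : e ∈ ⋃ j, φ j '' E := h.dec ▸ he
        rw [Set.mem_iUnion] at he'
        obtain ⟨j, hj⟩ := he'
        rwa [Subsingleton.elim j 0] at hj
      · exact h.image_sub 0
    have hsub : ∀ k : ℕ, E ⊆ iterMap φ (seg (fun _ => (0 : Fin 1)) k) '' E := by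
      intro k
      induction k with
      | zero =>
        rw [show seg (fun _ => (0 : Fin 1)) 0 = [] from rfl]
        simp
      | succ k ih =>
        rw [seg_succ, iterMap_append, Set.image_comp]
        have : iterMap φ [(0 : Fin 1)] '' E = φ 0 '' E := by
          rw [show iterMap φ [(0:Fin 1)] = φ 0 ∘ id from rfl, Set.image_comp]
          simp
        rw [this, ← huniq]
        exact ih
    obtain ⟨c, hc0, hc1, hcb⟩ := rmax_spec h
    have hk : ∀ k : ℕ, dist u v ≤ c ^ k * diam E := by
      intro k
      refine (h.dist_le_cyl (hsub k hu) (hsub k hv)).trans ?_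
      refine mul_le_mul_of_nonneg_right ?_ diam_nonneg
      have := wprod_le_pow h.pos hcb (seg (fun _ => (0:Fin 1)) k)
      rwa [seg_length] at this
    have hlim : Filter.Tendsto (fun k : ℕ => c ^ k * diam E) Filter.atTop (nhds 0) := by
      have := (tendsto_pow_atTop_nhds_zero_of_lt_one hc0 hc1).mul_const (diam E)
      simpa using this
    have : dist u v ≤ 0 := ge_of_tendsto' hlim hk
    exact huv (dist_le_zero.mp this)

end



open Classical in
noncomputable def stopSet (ρ : Fin m → ℝ) (ε : ℝ) : ℕ → List (Fin m) → Finset (List (Fin m))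
  | 0, I => {I}
  | fuel + 1, I =>
      if wprod ρ I ≤ ε then {I}
      else Finset.univ.biUnion fun j : Fin m => stopSet ρ ε fuel (I ++ [j])

variable {ρ : Fin m → ℝ} {ε c c' : ℝ}

lemma mem_stop_prefix {fuel : ℕ} {I J : List (Fin m)} (hJ : J ∈ stopSet ρ ε fuel I) :
    I <+: J := by
  induction fuel generalizing I with
  | zero =>
    rw [stopSet, Finset.mem_singleton] at hJ
    exact hJ ▸ List.prefix_refl _
  | succ fuel ih =>
    rw [stopSet] at hJ
    split_ifs at hJ with hw
    · rw [Finset.mem_singleton] at hJ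
      exact hJ ▸ List.prefix_refl _
    · rw [Finset.mem_biUnion] at hJ
      obtain ⟨j, _, hj⟩ := hJ
      exact (List.prefix_append I [j]).trans (ih hj)

lemma stop_wprod_le (h0 : ∀ j, 0 < ρ j) (hc : ∀ j, ρ j ≤ c) {fuel : ℕ} {I J : List (Fin m)}
    (hg : wprod ρ I ≤ ε ∨ c ^ fuel * wprod ρ I ≤ ε) (hJ : J ∈ stopSet ρ ε fuel I) :
    wprod ρ J ≤ ε := by
  induction fuel generalizing I with
  | zero =>
    rw [stopSet, Finset.mem_singleton] at hJ
    subst hJ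
    rcases hg with hg | hg
    · exact hg
    · simpa using hg
  | succ fuel ih =>
    rw [stopSet] at hJ
    split_ifs at hJ with hw
    · rw [Finset.mem_singleton] at hJ
      exact hJ ▸ hw
    · rw [Finset.mem_biUnion] at hJ
      obtain ⟨j, _, hj⟩ := hJ
      have hcnn : 0 ≤ c := (h0 j).le.trans (hc j)
      refine ih (I := I ++ [j]) (Or.inr ?_) hj
      have hg' : c ^ (fuel + 1) * wprod ρ I ≤ ε := by
        rcases hg with hg | hg
        · exact absurd hg hw
        · exact hg
      rw [wprod_concat]
      calc c ^ fuel * (wprod ρ I * ρ j) ≤ c ^ fuel * (wprod ρ I * c) :=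
            mul_le_mul_of_nonneg_left
              (mul_le_mul_of_nonneg_left (hc j) (wprod_pos h0 I).le) (pow_nonneg hcnn fuel)
        _ = c ^ (fuel + 1) * wprod ρ I := by ring
        _ ≤ ε := hg'

lemma stop_disj (h0 : ∀ j, 0 < ρ j) {fuel : ℕ} {I : List (Fin m)} {j j' : Fin m}
    (hne : j ≠ j') : Disjoint (stopSet ρ ε fuel (I ++ [j])) (stopSet ρ ε fuel (I ++ [j'])) := by
  rw [Finset.disjoint_left]
  intro J hJ hJ'
  have h1 := mem_stop_prefix hJ
  have h2 := mem_stop_prefix hJ'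
  have := List.prefix_of_prefix_length_le h1 h2 (by simp)
  have := this.eq_of_length (by simp)
  exact hne (by simpa using this)

lemma stop_sum (h0 : ∀ j, 0 < ρ j) {u : ℝ} (hu : ∑ j, ρ j ^ u = 1) {fuel : ℕ}
    (I : List (Fin m)) :
    ∑ J ∈ stopSet ρ ε fuel I, wprod ρ J ^ u = wprod ρ I ^ u := by
  induction fuel generalizing I with
  | zero => rw [stopSet, Finset.sum_singleton]
  | succ fuel ih =>
    rw [stopSet]
    split_ifs with hw
    · rw [Finset.sum_singleton]
    · rw [Finset.sum_biUnion]
      · calc ∑ j, ∑ J ∈ stopSet ρ ε fuel (I ++ [j]), wprod ρ J ^ u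
            = ∑ j : Fin m, wprod ρ (I ++ [j]) ^ u := by
              exact Finset.sum_congr rfl fun j _ => ih _
          _ = ∑ j : Fin m, wprod ρ I ^ u * ρ j ^ u := by
              refine Finset.sum_congr rfl fun j _ => ?_
              rw [wprod_concat, Real.mul_rpow (wprod_pos h0 I).le (h0 j).le]
          _ = wprod ρ I ^ u := by rw [← Finset.mul_sum, hu, mul_one]
      · intro j _ j' _ hne
        exact stop_disj h0 hne

lemma stop_antichain {fuel : ℕ} {I J J' : List (Fin m)} (hJ : J ∈ stopSet ρ ε fuel I)
    (hJ' : J' ∈ stopSet ρ ε fuel I) (hp : J <+: J') : J = J' := by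
  induction fuel generalizing I with
  | zero =>
    rw [stopSet, Finset.mem_singleton] at hJ hJ'
    rw [hJ, hJ']
  | succ fuel ih =>
    rw [stopSet] at hJ hJ'
    split_ifs at hJ hJ' with hw
    · rw [Finset.mem_singleton] at hJ hJ'
      rw [hJ, hJ']
    · rw [Finset.mem_biUnion] at hJ hJ'
      obtain ⟨j, _, hj⟩ := hJ
      obtain ⟨j', _, hj'⟩ := hJ'
      have h1 := mem_stop_prefix hj
      have h2 := mem_stop_prefix hj'
      have hpre : I ++ [j] <+: I ++ [j'] :=
        List.prefix_of_prefix_length_le (h1.trans hp) h2 (by simp)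
      have : j = j' := by simpa using hpre.eq_of_length (by simp)
      subst this
      exact ih hj hj' 

lemma stop_proper {fuel : ℕ} {I J K : List (Fin m)} (hJ : J ∈ stopSet ρ ε fuel I)
    (hK : K <+: J) (hne : K ≠ J) (hIK : I <+: K) : ε < wprod ρ K := by
  induction fuel generalizing I with
  | zero =>
    rw [stopSet, Finset.mem_singleton] at hJ
    subst hJ
    exact absurd (hK.eq_of_length (le_antisymm hK.length_le hIK.length_le)) hne
  | succ fuel ih =>
    rw [stopSet] at hJ
    split_ifs at hJ with hw
    · rw [Finset.mem_singleton] at hJ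
      subst hJ
      exact absurd (hK.eq_of_length (le_antisymm hK.length_le hIK.length_le)) hne
    · push_neg at hw
      rw [Finset.mem_biUnion] at hJ
      obtain ⟨j, _, hj⟩ := hJ
      by_cases hKI : K = I
      · exact hKI ▸ hw
      · have hlen : I.length < K.length := by
          rcases lt_or_eq_of_le hIK.length_le with h | h
          · exact h
          · exact absurd (hIK.eq_of_length h).symm hKI
        have hpre : I ++ [j] <+: K :=
          List.prefix_of_prefix_length_le (mem_stop_prefix hj) hK (by simpa using hlen)
        exact ih (I := I ++ [j]) hj hpre

lemma stop_lower (h0 : ∀ j, 0 < ρ j) (hc'0 : 0 < c') (hmin : ∀ j, c' ≤ ρ j) {fuel : ℕ}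
    {I J : List (Fin m)} (hJ : J ∈ stopSet ρ ε fuel I) : J = I ∨ c' * ε < wprod ρ J := by
  induction fuel generalizing I with
  | zero =>
    rw [stopSet, Finset.mem_singleton] at hJ
    exact Or.inl hJ
  | succ fuel ih =>
    rw [stopSet] at hJ
    split_ifs at hJ with hw
    · rw [Finset.mem_singleton] at hJ
      exact Or.inl hJ
    · push_neg at hw
      rw [Finset.mem_biUnion] at hJ
      obtain ⟨j, _, hj⟩ := hJ
      right
      rcases ih hj with hJI | hlt
      · subst hJI
        rw [wprod_concat]
        calc c' * ε < c' * wprod ρ I := by nlinarith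
          _ ≤ ρ j * wprod ρ I := by nlinarith [wprod_pos h0 I, hmin j]
          _ = wprod ρ I * ρ j := mul_comm _ _
      · exact hlt

lemma stop_cover (h0 : ∀ j, 0 < ρ j) (hc : ∀ j, ρ j ≤ c) {fuel : ℕ} {I : List (Fin m)}
    {x : ℕ → Fin m} (hg : wprod ρ I ≤ ε ∨ c ^ fuel * wprod ρ I ≤ ε)
    (hxI : I = seg x I.length) :
    ∃ J ∈ stopSet ρ ε fuel I, J = seg x J.length := by
  induction fuel generalizing I with
  | zero =>
    exact ⟨I, by rw [stopSet]; exact Finset.mem_singleton_self I, hxI⟩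
  | succ fuel ih =>
    rw [stopSet]
    split_ifs with hw
    · exact ⟨I, Finset.mem_singleton_self I, hxI⟩
    · set j := x I.length with hj
      have hIj : I ++ [j] = seg x (I ++ [j]).length := by
        have : (I ++ [j]).length = I.length + 1 := by simp
        rw [this, seg_succ, ← hxI]
      have hg' : wprod ρ (I ++ [j]) ≤ ε ∨ c ^ fuel * wprod ρ (I ++ [j]) ≤ ε := by
        right
        have hg'' : c ^ (fuel + 1) * wprod ρ I ≤ ε := by
          rcases hg with hg | hg
          · exact absurd hg hw
          · exact hg
        have hcnn : 0 ≤ c := (h0 j).le.trans (hc j)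
        rw [wprod_concat]
        calc c ^ fuel * (wprod ρ I * ρ j) ≤ c ^ fuel * (wprod ρ I * c) :=
              mul_le_mul_of_nonneg_left
                (mul_le_mul_of_nonneg_left (hc j) (wprod_pos h0 I).le) (pow_nonneg hcnn fuel)
          _ = c ^ (fuel + 1) * wprod ρ I := by ring
          _ ≤ ε := hg''
      obtain ⟨J, hJ, hJx⟩ := ih hg' hIj
      exact ⟨J, Finset.mem_biUnion.mpr ⟨j, Finset.mem_univ j, hJ⟩, hJx⟩


/-! ### Auxiliary facts about extension of words to codes -/

section Ext
variable {n : ℕ}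

lemma ext_seg (j₀ : Fin n) (J : List (Fin n)) {k : ℕ} (hk : k ≤ J.length) :
    seg (fun i => J.getD i j₀) k = J.take k := by
  apply List.ext_getElem
  · simp [seg_length, hk]
  · intro i h1 h2
    have hik : i < k := by simpa [seg_length] using h1
    have hiJ : i < J.length := lt_of_lt_of_le hik hk
    simp [seg, List.getD_eq_getElem, hiJ]

lemma ext_seg_full (j₀ : Fin n) (J : List (Fin n)) :
    seg (fun i => J.getD i j₀) J.length = J := by
  rw [ext_seg j₀ J le_rfl, List.take_length]

end Ext

/-! ### The dimension comparison -/

lemma dim_compare {X : Type*} [MetricSpace X] {m n : ℕ} {ρ : Fin m → ℝ} {τ : Fin n → ℝ}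
    {φ : Fin m → X → X} {ψ : Fin n → X → X} {E F : Set X}
    (hE : DS ρ φ E) (hF : DS τ ψ F) (hm : 2 ≤ m)
    {f : X → X} {C : ℝ} (hC : 0 < C) (hbij : Set.BijOn f E F)
    (hlip : ∀ x ∈ E, ∀ y ∈ E,
      C⁻¹ * dist x y ≤ dist (f x) (f y) ∧ dist (f x) (f y) ≤ C * dist x y)
    {s t : ℝ} (hs : 0 < s) (hst : s < t)
    (hρs : ∑ j, ρ j ^ s = 1) (hτt : ∑ j, τ j ^ t = 1) : False := by
  classical
  haveI : Nonempty X := ⟨hE.ne.some⟩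
  haveI hFinm : Nonempty (Fin m) := hE.finNonempty
  haveI hFinn : Nonempty (Fin n) := hF.finNonempty
  obtain ⟨δF, hδF, hsepF⟩ := exists_sep hF
  obtain ⟨c', hc'pos, hc'le⟩ : ∃ c' : ℝ, 0 < c' ∧ ∀ j, c' ≤ ρ j := by
    refine ⟨Finset.univ.inf' Finset.univ_nonempty ρ, ?_,
      fun j => Finset.inf'_le ρ (Finset.mem_univ j)⟩
    exact (Finset.lt_inf'_iff _).mpr fun j _ => hE.pos j
  obtain ⟨cρ, hcρ0, hcρ1, hcρb⟩ := rmax_spec hE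
  obtain ⟨cτ, hcτ0, hcτ1, hcτb⟩ := rmax_spec hF
  have hDE : 0 < diam E := diam_pos hE hm
  set c₁ : ℝ := C⁻¹ * δF / (2 * diam E) with hc₁def
  have hc₁ : 0 < c₁ := by positivity
  set K : ℝ := (c' * c₁) ^ (-s) with hKdef
  have hK : 0 < K := Real.rpow_pos_of_pos (by positivity) _
  have ht : 0 < t := hs.trans hst
  -- addresses on E
  set aE : X → (ℕ → Fin m) := Function.invFun (pi hE) with haEdef
  have haddrE : ∀ e ∈ E, pi hE (aE e) = e := fun e he => Function.invFun_eq (pi_surj hE he)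
  -- chosen preimages under f
  have hpre : ∀ v ∈ F, Function.invFunOn f E v ∈ E ∧ f (Function.invFunOn f E v) = v := by
    intro v hv
    obtain ⟨u, hu, huv⟩ := hbij.2.2 hv
    exact ⟨Function.invFunOn_mem ⟨u, hu, huv⟩, Function.invFunOn_eq ⟨u, hu, huv⟩⟩
  set j₀ : Fin n := Classical.arbitrary _
  set ext : List (Fin n) → (ℕ → Fin n) := fun J i => J.getD i j₀ with hextdef
  set pt : List (Fin n) → X := fun J => Function.invFunOn f E (pi hF (ext J)) with hptdef
  have hptE : ∀ J, pt J ∈ E := fun J => (hpre _ (pi_mem_base hF _)).1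
  have hfpt : ∀ J, f (pt J) = pi hF (ext J) := fun J => (hpre _ (pi_mem_base hF _)).2
  -- the key counting inequality
  have key : ∀ ε : ℝ, 0 < ε → c₁ * ε < 1 → ε ^ (-t) ≤ K * ε ^ (-s) := by
    intro ε hε hc₁ε
    obtain ⟨N₁, hN₁⟩ := exists_pow_lt_of_lt_one hε hcτ1
    obtain ⟨N₂, hN₂⟩ := exists_pow_lt_of_lt_one (mul_pos hc₁ hε) hcρ1
    set Sτ := stopSet τ ε N₁ ([] : List (Fin n)) with hSτdef
    set Sρ := stopSet ρ (c₁ * ε) N₂ ([] : List (Fin m)) with hSρdef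
    have hgτ : wprod τ ([] : List (Fin n)) ≤ ε ∨ cτ ^ N₁ * wprod τ [] ≤ ε :=
      Or.inr (by rw [wprod_nil, mul_one]; exact hN₁.le)
    have hgρ : wprod ρ ([] : List (Fin m)) ≤ c₁ * ε ∨ cρ ^ N₂ * wprod ρ [] ≤ c₁ * ε :=
      Or.inr (by rw [wprod_nil, mul_one]; exact hN₂.le)
    -- (i) lower bound on the cardinality of Sτ
    have hsumτ : ∑ J ∈ Sτ, wprod τ J ^ t = 1 := by
      have := stop_sum (ε := ε) hF.pos hτt (fuel := N₁) ([] : List (Fin n))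
      rwa [wprod_nil, Real.one_rpow] at this
    have hi : ε ^ (-t) ≤ (Sτ.card : ℝ) := by
      have hle : ∀ J ∈ Sτ, wprod τ J ^ t ≤ ε ^ t := fun J hJ =>
        Real.rpow_le_rpow (wprod_pos hF.pos J).le (stop_wprod_le hF.pos hcτb hgτ hJ) ht.le
      have hcard1 : (1:ℝ) ≤ (Sτ.card : ℝ) * ε ^ t := by
        calc (1:ℝ) = ∑ J ∈ Sτ, wprod τ J ^ t := hsumτ.symm
          _ ≤ Sτ.card • (ε ^ t) := Finset.sum_le_card_nsmul _ _ _ hle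
          _ = (Sτ.card : ℝ) * ε ^ t := by rw [nsmul_eq_mul]
      rw [Real.rpow_neg hε.le, ← one_div, div_le_iff₀ (Real.rpow_pos_of_pos hε t)]
      exact hcard1
    -- (ii) upper bound on the cardinality of Sρ
    have hsumρ : ∑ J ∈ Sρ, wprod ρ J ^ s = 1 := by
      have := stop_sum (ε := c₁ * ε) hE.pos hρs (fuel := N₂) ([] : List (Fin m))
      rwa [wprod_nil, Real.one_rpow] at this
    have hii : (Sρ.card : ℝ) ≤ (c' * (c₁ * ε)) ^ (-s) := by
      have hlow : ∀ J ∈ Sρ, (c' * (c₁ * ε)) ^ s ≤ wprod ρ J ^ s := by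
        intro J hJ
        have hJne : J ≠ [] := by
          intro hJnil
          have := stop_wprod_le hE.pos hcρb hgρ hJ
          rw [hJnil, wprod_nil] at this
          linarith
        rcases stop_lower hE.pos hc'pos hc'le hJ with h | h
        · exact absurd h hJne
        · exact Real.rpow_le_rpow (by positivity) h.le hs.le
      have hcard2 : (Sρ.card : ℝ) * ((c' * (c₁ * ε)) ^ s) ≤ 1 := by
        calc (Sρ.card : ℝ) * ((c' * (c₁ * ε)) ^ s)
            = Sρ.card • ((c' * (c₁ * ε)) ^ s) := by rw [nsmul_eq_mul]
          _ ≤ ∑ J ∈ Sρ, wprod ρ J ^ s := Finset.card_nsmul_le_sum _ _ _ hlow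
          _ = 1 := hsumρ
      rw [Real.rpow_neg (by positivity), ← one_div,
        le_div_iff₀ (Real.rpow_pos_of_pos (by positivity) s)]
      exact hcard2
    -- (iii) the injection from Sτ into Sρ
    have hiii : Sτ.card ≤ Sρ.card := by
      have hcov : ∀ J : List (Fin n), ∃ J' ∈ Sρ, J' = seg (aE (pt J)) J'.length := fun J =>
        stop_cover hE.pos hcρb (x := aE (pt J)) hgρ rfl
      set θ : List (Fin n) → List (Fin m) := fun J => (hcov J).choose with hθdef
      have hθmem : ∀ J, θ J ∈ Sρ := fun J => (hcov J).choose_spec.1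
      have hθseg : ∀ J, θ J = seg (aE (pt J)) (θ J).length := fun J => (hcov J).choose_spec.2
      apply Finset.card_le_card_of_injOn θ (fun J _ => hθmem J)
      intro J hJ J' hJ' hθe
      by_contra hne
      -- both points lie in the cylinder of θ J
      have hptmem : pt J ∈ iterMap φ (θ J) '' E := by
        have h2 := pi_mem hE (aE (pt J)) (θ J).length
        rw [← hθseg J] at h2
        rwa [haddrE _ (hptE J)] at h2
      have hptmem' : pt J' ∈ iterMap φ (θ J) '' E := by
        have h2 := pi_mem hE (aE (pt J')) (θ J').length
        rw [← hθseg J'] at h2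
        rw [haddrE _ (hptE J')] at h2
        rwa [← hθe] at h2
      have hdistu : dist (pt J) (pt J') ≤ c₁ * ε * diam E := by
        refine (hE.dist_le_cyl hptmem hptmem').trans ?_
        exact mul_le_mul_of_nonneg_right
          (stop_wprod_le hE.pos hcρb hgρ (hθmem J)) diam_nonneg
      -- incomparability of J and J'
      have hJJ'1 : ¬ J <+: J' := fun hp => hne (stop_antichain hJ hJ' hp)
      have hJJ'2 : ¬ J' <+: J := fun hp => hne (stop_antichain hJ' hJ hp).symm
      have hxne : ext J ≠ ext J' := by
        intro hc
        rcases le_total J.length J'.length with h | h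
        · refine hJJ'1 ?_
          have e1 : J = seg (ext J') J.length := by rw [← hc]; exact (ext_seg_full j₀ J).symm
          have e2 : seg (ext J') J.length <+: J' := by
            rw [ext_seg j₀ J' h]; exact List.take_prefix _ _
          rw [e1]; exact e2
        · refine hJJ'2 ?_
          have e1 : J' = seg (ext J) J'.length := by rw [hc]; exact (ext_seg_full j₀ J').symm
          have e2 : seg (ext J) J'.length <+: J := by
            rw [ext_seg j₀ J h]; exact List.take_prefix _ _
          rw [e1]; exact e2
      obtain ⟨ℓ, hℓseg, hℓne⟩ := firstDiff hxne
      -- ℓ is less than both lengths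
      have hℓJ : ℓ < J.length := by
        by_contra hge
        push_neg at hge
        rcases Nat.lt_or_ge ℓ J'.length with h' | h'
        · refine hJJ'1 ?_
          have e1 : J = seg (ext J) J.length := (ext_seg_full j₀ J).symm
          have e2 : seg (ext J) J.length = seg (ext J') J.length := by
            have h3 : (seg (ext J) ℓ).take J.length = (seg (ext J') ℓ).take J.length := by
              rw [hℓseg]
            rwa [seg_take hge, seg_take hge] at h3
          have e3 : seg (ext J') J.length <+: J' := by
            rw [ext_seg j₀ J' (hge.trans h'.le)]; exact List.take_prefix _ _
          rw [e1, e2]; exact e3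
        · refine hℓne ?_
          have g1 : ext J ℓ = j₀ := List.getD_eq_default _ _ hge
          have g2 : ext J' ℓ = j₀ := List.getD_eq_default _ _ h'
          rw [g1, g2]
      have hℓJ' : ℓ < J'.length := by
        by_contra hge
        push_neg at hge
        rcases Nat.lt_or_ge ℓ J.length with h' | h'
        · refine hJJ'2 ?_
          have e1 : J' = seg (ext J') J'.length := (ext_seg_full j₀ J').symm
          have e2 : seg (ext J') J'.length = seg (ext J) J'.length := by
            have h3 : (seg (ext J') ℓ).take J'.length = (seg (ext J) ℓ).take J'.length := by
              rw [hℓseg]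
            rwa [seg_take hge, seg_take hge] at h3
          have e3 : seg (ext J) J'.length <+: J := by
            rw [ext_seg j₀ J (hge.trans h'.le)]; exact List.take_prefix _ _
          rw [e1, e2]; exact e3
        · refine hℓne ?_
          have g1 : ext J ℓ = j₀ := List.getD_eq_default _ _ h'
          have g2 : ext J' ℓ = j₀ := List.getD_eq_default _ _ hge
          rw [g1, g2]
      -- the common prefix is a proper prefix of J, so it has large weight
      have hKpre : seg (ext J) ℓ <+: J := by
        rw [ext_seg j₀ J hℓJ.le]; exact List.take_prefix _ _
      have hKne : seg (ext J) ℓ ≠ J := by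
        intro hcontra
        have := congrArg List.length hcontra
        rw [seg_length] at this
        omega
      have hKlow : ε < wprod τ (seg (ext J) ℓ) :=
        stop_proper hJ hKpre hKne List.nil_prefix
      -- lower bound on distance between the F-points
      have hdistv : δF * wprod τ (seg (ext J) ℓ) ≤ dist (pi hF (ext J)) (pi hF (ext J')) :=
        le_dist_pi hF hsepF hℓseg hℓne
      -- transfer through f
      have hfv : dist (pi hF (ext J)) (pi hF (ext J')) ≤ C * dist (pt J) (pt J') := by
        have := (hlip (pt J) (hptE J) (pt J') (hptE J')).2
        rwa [hfpt J, hfpt J'] at this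
      have hchain : δF * ε < C * (c₁ * ε * diam E) := by
        have h1 : δF * ε < δF * wprod τ (seg (ext J) ℓ) := by
          exact (mul_lt_mul_iff_right₀ hδF).mpr hKlow
        have h2 : C * dist (pt J) (pt J') ≤ C * (c₁ * ε * diam E) :=
          mul_le_mul_of_nonneg_left hdistu hC.le
        linarith
      have heq : C * (c₁ * ε * diam E) = δF * ε / 2 := by
        rw [hc₁def]
        field_simp
      rw [heq] at hchain
      nlinarith
    -- combine (i)-(iii)
    calc ε ^ (-t) ≤ (Sτ.card : ℝ) := hi
      _ ≤ (Sρ.card : ℝ) := by exact_mod_cast hiii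
      _ ≤ (c' * (c₁ * ε)) ^ (-s) := hii
      _ = K * ε ^ (-s) := by
          rw [← mul_assoc, hKdef, ← Real.mul_rpow (by positivity) hε.le]
  -- derive the contradiction
  have hts : 0 < t - s := by linarith
  set M : ℝ := max K 1 + 1 with hMdef
  have hM1 : 1 < M := by
    have := le_max_right K 1
    rw [hMdef]; linarith
  have hMK : K < M := by
    have := le_max_left K 1
    rw [hMdef]; linarith
  set ε₁ : ℝ := M ^ (-(t - s)⁻¹) with hε₁def
  have hε₁ : 0 < ε₁ := Real.rpow_pos_of_pos (by linarith) _
  set ε₀ : ℝ := min ε₁ ((2 * c₁)⁻¹) with hε₀def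
  have hε₀ : 0 < ε₀ := lt_min hε₁ (by positivity)
  have hc₁ε : c₁ * ε₀ < 1 := by
    have h1 : ε₀ ≤ (2 * c₁)⁻¹ := min_le_right _ _
    have h2 : c₁ * ε₀ ≤ c₁ * (2 * c₁)⁻¹ := mul_le_mul_of_nonneg_left h1 hc₁.le
    have h3 : c₁ * (2 * c₁)⁻¹ = 1 / 2 := by field_simp
    rw [h3] at h2
    linarith
  have hkey := key ε₀ hε₀ hc₁ε
  have h1 : ε₀ ^ (-t) = ε₀ ^ (s - t) * ε₀ ^ (-s) := by
    rw [← Real.rpow_add hε₀]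
    ring_nf
  have h2 : ε₀ ^ (s - t) ≤ K := by
    have hpos := Real.rpow_pos_of_pos hε₀ (-s)
    rw [h1] at hkey
    exact le_of_mul_le_mul_right hkey hpos
  have h3 : M ≤ ε₀ ^ (s - t) := by
    have hle : ε₀ ≤ ε₁ := min_le_left _ _
    have hinv : ε₁⁻¹ ≤ ε₀⁻¹ := by
      apply inv_anti₀ hε₀ hle
    have hmono : ε₁⁻¹ ^ (t - s) ≤ ε₀⁻¹ ^ (t - s) :=
      Real.rpow_le_rpow (by positivity) hinv hts.le
    have e0 : ∀ x : ℝ, 0 < x → x ^ (s - t) = x⁻¹ ^ (t - s) := by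
      intro x hx
      rw [Real.inv_rpow hx.le, ← Real.rpow_neg hx.le, neg_sub]
    have hMpos : (0:ℝ) < M := by linarith
    have e1 : ε₁ ^ (s - t) = M := by
      rw [hε₁def, ← Real.rpow_mul hMpos.le]
      rw [show -(t - s)⁻¹ * (s - t) = 1 from by
        have hne : t - s ≠ 0 := hts.ne'
        field_simp
        ring]
      exact Real.rpow_one M
    calc M = ε₁ ^ (s - t) := e1.symm
      _ = ε₁⁻¹ ^ (t - s) := e0 ε₁ hε₁
      _ ≤ ε₀⁻¹ ^ (t - s) := hmono
      _ = ε₀ ^ (s - t) := (e0 ε₀ hε₀).symm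
  linarith

/-! ### Transfer of Lipschitz equivalence to snowflaked systems -/

lemma main_equiv {X : Type*} [MetricSpace X] {m n : ℕ} {r : ℝ} (hr : 0 < r)
    {ρ : Fin m → ℝ} {τ : Fin n → ℝ}
    {φE : Fin m → X → X} {ψF : Fin n → X → X} {φ' : Fin m → X → X} {ψ' : Fin n → X → X}
    {E F E' F' : Set X}
    (hE : DS ρ φE E) (hF : DS τ ψF F)
    (hE' : DS (fun j => ρ j ^ r) φ' E') (hF' : DS (fun j => τ j ^ r) ψ' F')
    (hm : 2 ≤ m) (hn : 2 ≤ n)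
    {f : X → X} {C : ℝ} (hC : 0 < C) (hbij : Set.BijOn f E F)
    (hlip : ∀ x ∈ E, ∀ y ∈ E,
      C⁻¹ * dist x y ≤ dist (f x) (f y) ∧ dist (f x) (f y) ≤ C * dist x y) :
    ∃ (g : X → X) (Cg : ℝ), 0 < Cg ∧ Set.BijOn g E' F' ∧
      ∀ x ∈ E', ∀ y ∈ E',
        Cg⁻¹ * dist x y ≤ dist (g x) (g y) ∧ dist (g x) (g y) ≤ Cg * dist x y := by
  classical
  haveI : Nonempty X := ⟨hE.ne.some⟩
  haveI : Nonempty (Fin m) := hE.finNonempty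
  haveI : Nonempty (Fin n) := hF.finNonempty
  obtain ⟨δE, hδE, hsepE⟩ := exists_sep hE
  obtain ⟨δF, hδF, hsepF⟩ := exists_sep hF
  obtain ⟨δE', hδE', hsepE'⟩ := exists_sep hE'
  obtain ⟨δF', hδF', hsepF'⟩ := exists_sep hF'
  have hDE : 0 < diam E := diam_pos hE hm
  have hDF : 0 < diam F := diam_pos hF hn
  have hDE' : 0 < diam E' := diam_pos hE' hm
  have hDF' : 0 < diam F' := diam_pos hF' hn
  have hinjE := pi_inj hE hδE hsepE
  have hinjF := pi_inj hF hδF hsepF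
  have hinjE' := pi_inj hE' hδE' hsepE'
  set aE' : X → (ℕ → Fin m) := Function.invFun (pi hE') with haE'
  set aF : X → (ℕ → Fin n) := Function.invFun (pi hF) with haF
  have haE'val : ∀ u ∈ E', pi hE' (aE' u) = u := fun u hu => Function.invFun_eq (pi_surj hE' hu)
  have haFval : ∀ v ∈ F, pi hF (aF v) = v := fun v hv => Function.invFun_eq (pi_surj hF hv)
  have haE'left : ∀ x, aE' (pi hE' x) = x := Function.leftInverse_invFun hinjE'
  have haFleft : ∀ x, aF (pi hF x) = x := Function.leftInverse_invFun hinjF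
  set g : X → X := fun u => pi hF' (aF (f (pi hE (aE' u)))) with hgdef
  -- bijectivity
  have hbijg : Set.BijOn g E' F' := by
    have b1 : Set.BijOn aE' E' Set.univ :=
      ⟨fun _ _ => Set.mem_univ _,
       fun u hu v hv he => by rw [← haE'val u hu, ← haE'val v hv, he],
       fun x _ => ⟨pi hE' x, pi_mem_base hE' x, haE'left x⟩⟩
    have b2 : Set.BijOn (pi hE) Set.univ E :=
      ⟨fun x _ => pi_mem_base hE x, fun x _ y _ he => hinjE he,
       fun e he => by obtain ⟨x, hx⟩ := pi_surj hE he; exact ⟨x, Set.mem_univ x, hx⟩⟩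
    have b4 : Set.BijOn aF F Set.univ :=
      ⟨fun _ _ => Set.mem_univ _,
       fun u hu v hv he => by rw [← haFval u hu, ← haFval v hv, he],
       fun x _ => ⟨pi hF x, pi_mem_base hF x, haFleft x⟩⟩
    have b5 : Set.BijOn (pi hF') Set.univ F' :=
      ⟨fun x _ => pi_mem_base hF' x, fun x _ y _ he => pi_inj hF' hδF' hsepF' he,
       fun e he => by obtain ⟨x, hx⟩ := pi_surj hF' he; exact ⟨x, Set.mem_univ x, hx⟩⟩
    have hcomp := b5.comp (b4.comp (hbij.comp (b2.comp b1)))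
    exact hcomp
  -- constants
  set A : ℝ := δF⁻¹ * (C * diam E) with hAdef
  set B : ℝ := (diam F)⁻¹ * (C⁻¹ * δE) with hBdef
  have hApos : 0 < A := by rw [hAdef]; positivity
  have hBpos : 0 < B := by rw [hBdef]; positivity
  set Cu : ℝ := A ^ r * δE'⁻¹ * diam F' with hCudef
  set Cl : ℝ := δF' * B ^ r * (diam E')⁻¹ with hCldef
  have hCupos : 0 < Cu := by
    rw [hCudef]
    have := Real.rpow_pos_of_pos hApos r
    positivity
  have hClpos : 0 < Cl := by
    rw [hCldef]
    have := Real.rpow_pos_of_pos hBpos r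
    positivity
  set Cg : ℝ := max Cu Cl⁻¹ with hCgdef
  have hCgpos : 0 < Cg := lt_of_lt_of_le (inv_pos.mpr hClpos) (le_max_right _ _)
  refine ⟨g, Cg, hCgpos, hbijg, ?_⟩
  intro u hu v hv
  by_cases huv : u = v
  · subst huv
    constructor
    · simp
    · simp [mul_nonneg hCgpos.le dist_nonneg]
  set x := aE' u with hxdef
  set y := aE' v with hydef
  have hxu : pi hE' x = u := haE'val u hu
  have hyv : pi hE' y = v := haE'val v hv
  have hxyne : x ≠ y := fun hc => huv (by rw [← hxu, ← hyv, hc])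
  obtain ⟨k, hk, hkne⟩ := firstDiff hxyne
  set P := wprod ρ (seg x k) with hPdef
  have hPpos : 0 < P := wprod_pos hE.pos _
  have hProw : wprod (fun j => ρ j ^ r) (seg x k) = P ^ r := wprod_rpow hE.pos r _
  have est1a : dist u v ≤ P ^ r * diam E' := by
    have h := dist_pi_le hE' (x := x) (y := y) hk
    rwa [hProw, hxu, hyv] at h
  have est1b : δE' * P ^ r ≤ dist u v := by
    have h := le_dist_pi hE' hsepE' hk hkne
    rwa [hProw, hxu, hyv] at h
  set a := pi hE x with hadef
  set b := pi hE y with hbdef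
  have est2a : dist a b ≤ P * diam E := dist_pi_le hE hk
  have est2b : δE * P ≤ dist a b := le_dist_pi hE hsepE hk hkne
  have haE : a ∈ E := pi_mem_base hE x
  have hbE : b ∈ E := pi_mem_base hE y
  have est3a : dist (f a) (f b) ≤ C * dist a b := (hlip a haE b hbE).2
  have est3b : C⁻¹ * dist a b ≤ dist (f a) (f b) := (hlip a haE b hbE).1
  have hfaF : f a ∈ F := hbij.1 haE
  have hfbF : f b ∈ F := hbij.1 hbE
  set w := aF (f a) with hwdef
  set z := aF (f b) with hzdef
  have hwfa : pi hF w = f a := haFval _ hfaF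
  have hzfb : pi hF z = f b := haFval _ hfbF
  have hwz : w ≠ z := by
    intro hc
    have hfab : dist (f a) (f b) = 0 := by
      rw [← hwfa, ← hzfb, hc, dist_self]
    have h1 : C⁻¹ * (δE * P) ≤ C⁻¹ * dist a b :=
      mul_le_mul_of_nonneg_left est2b (inv_pos.mpr hC).le
    have h2 : (0:ℝ) < C⁻¹ * (δE * P) := by positivity
    linarith [est3b]
  obtain ⟨ℓ, hℓ, hℓne⟩ := firstDiff hwz
  set Q := wprod τ (seg w ℓ) with hQdef
  have hQpos : 0 < Q := wprod_pos hF.pos _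
  have hQrow : wprod (fun j => τ j ^ r) (seg w ℓ) = Q ^ r := wprod_rpow hF.pos r _
  have est4a : dist (f a) (f b) ≤ Q * diam F := by
    have h := dist_pi_le hF (x := w) (y := z) hℓ
    rwa [hwfa, hzfb] at h
  have est4b : δF * Q ≤ dist (f a) (f b) := by
    have h := le_dist_pi hF hsepF hℓ hℓne
    rwa [hwfa, hzfb] at h
  have hgu : g u = pi hF' w := rfl
  have hgv : g v = pi hF' z := rfl
  have est5a : dist (g u) (g v) ≤ Q ^ r * diam F' := by
    have h := dist_pi_le hF' (x := w) (y := z) hℓ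
    rw [hQrow] at h
    rwa [← hgu, ← hgv] at h
  have est5b : δF' * Q ^ r ≤ dist (g u) (g v) := by
    have h := le_dist_pi hF' hsepF' hℓ hℓne
    rw [hQrow] at h
    rwa [← hgu, ← hgv] at h
  have hQle : Q ≤ A * P := by
    have h1 : δF * Q ≤ C * (P * diam E) :=
      est4b.trans (est3a.trans (mul_le_mul_of_nonneg_left est2a hC.le))
    calc Q = δF⁻¹ * (δF * Q) := by field_simp
      _ ≤ δF⁻¹ * (C * (P * diam E)) :=
          mul_le_mul_of_nonneg_left h1 (inv_pos.mpr hδF).le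
      _ = A * P := by rw [hAdef]; ring
  have hQge : B * P ≤ Q := by
    have h1 : C⁻¹ * (δE * P) ≤ Q * diam F :=
      calc C⁻¹ * (δE * P) ≤ C⁻¹ * dist a b :=
            mul_le_mul_of_nonneg_left est2b (inv_pos.mpr hC).le
        _ ≤ dist (f a) (f b) := est3b
        _ ≤ Q * diam F := est4a
    calc B * P = (diam F)⁻¹ * (C⁻¹ * (δE * P)) := by rw [hBdef]; ring
      _ ≤ (diam F)⁻¹ * (Q * diam F) :=
          mul_le_mul_of_nonneg_left h1 (inv_pos.mpr hDF).le
      _ = Q := by field_simp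
  have hQrle : Q ^ r ≤ A ^ r * P ^ r := by
    rw [← Real.mul_rpow hApos.le hPpos.le]
    exact Real.rpow_le_rpow hQpos.le hQle hr.le
  have hQrge : B ^ r * P ^ r ≤ Q ^ r := by
    rw [← Real.mul_rpow hBpos.le hPpos.le]
    exact Real.rpow_le_rpow (by positivity) hQge hr.le
  have hupper : dist (g u) (g v) ≤ Cu * dist u v := by
    have hPr : P ^ r ≤ δE'⁻¹ * dist u v := by
      calc P ^ r = δE'⁻¹ * (δE' * P ^ r) := by field_simp
        _ ≤ δE'⁻¹ * dist u v :=
            mul_le_mul_of_nonneg_left est1b (inv_pos.mpr hδE').le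
    calc dist (g u) (g v) ≤ Q ^ r * diam F' := est5a
      _ ≤ (A ^ r * P ^ r) * diam F' := mul_le_mul_of_nonneg_right hQrle diam_nonneg
      _ ≤ (A ^ r * (δE'⁻¹ * dist u v)) * diam F' := by
          refine mul_le_mul_of_nonneg_right ?_ diam_nonneg
          exact mul_le_mul_of_nonneg_left hPr (Real.rpow_nonneg hApos.le r)
      _ = Cu * dist u v := by rw [hCudef]; ring
  have hlower : Cl * dist u v ≤ dist (g u) (g v) := by
    have hPr : (diam E')⁻¹ * dist u v ≤ P ^ r := by
      calc (diam E')⁻¹ * dist u v ≤ (diam E')⁻¹ * (P ^ r * diam E') :=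
            mul_le_mul_of_nonneg_left est1a (inv_pos.mpr hDE').le
        _ = P ^ r := by field_simp
    calc Cl * dist u v = δF' * (B ^ r * ((diam E')⁻¹ * dist u v)) := by rw [hCldef]; ring
      _ ≤ δF' * (B ^ r * P ^ r) := by
          refine mul_le_mul_of_nonneg_left ?_ hδF'.le
          exact mul_le_mul_of_nonneg_left hPr (Real.rpow_nonneg hBpos.le r)
      _ ≤ δF' * Q ^ r := mul_le_mul_of_nonneg_left hQrge hδF'.le
      _ ≤ dist (g u) (g v) := est5b
  constructor
  · have h1 : Cg⁻¹ ≤ Cl := by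
      have h2 : Cl⁻¹ ≤ Cg := le_max_right _ _
      calc Cg⁻¹ ≤ (Cl⁻¹)⁻¹ := inv_anti₀ (inv_pos.mpr hClpos) h2
        _ = Cl := inv_inv Cl
    calc Cg⁻¹ * dist u v ≤ Cl * dist u v := mul_le_mul_of_nonneg_right h1 dist_nonneg
      _ ≤ dist (g u) (g v) := hlower
  · calc dist (g u) (g v) ≤ Cu * dist u v := hupper
      _ ≤ Cg * dist u v := mul_le_mul_of_nonneg_right (le_max_left _ _) dist_nonneg

end LipRpowAux

theorem lipschitz_equivalent_rpow
    (d m n : ℕ) (hd : 1 ≤ d)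
    (ρ : Fin m → ℝ) (τ : Fin n → ℝ)
    (hρ : IsContractionVector d m ρ) (hτ : IsContractionVector d n τ)
    (E F : Set (EuclideanSpace ℝ (Fin d)))
    (hE : IsDustLike ρ E) (hF : IsDustLike τ F)
    (hEF : LipschitzEquivalent E F)
    (s : ℝ) (hs : 0 < s) (hdim : ∑ j, ρ j ^ s = 1) :
    ∀ r : ℝ, s < r →
      IsContractionVector d m (fun j => ρ j ^ r) ∧
      IsContractionVector d n (fun j => τ j ^ r) ∧
      ∀ E' F' : Set (EuclideanSpace ℝ (Fin d)),
        IsDustLike (fun j => ρ j ^ r) E' → IsDustLike (fun j => τ j ^ r) F' →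
        LipschitzEquivalent E' F' := by
  classical
  intro r hrs
  have hr0 : 0 < r := hs.trans hrs
  have hρ0 : ∀ j, 0 < ρ j := fun j => (hρ.1 j).1
  have hρ1 : ∀ j, ρ j < 1 := fun j => (hρ.1 j).2
  have hτ0 : ∀ j, 0 < τ j := fun j => (hτ.1 j).1
  have hτ1 : ∀ j, τ j < 1 := fun j => (hτ.1 j).2
  have hm : 2 ≤ m := by
    by_contra hc
    push_neg at hc
    interval_cases m
    · simp at hdim
    · rw [Fin.sum_univ_one] at hdim
      have := Real.rpow_lt_one (hρ0 0).le (hρ1 0) hs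
      linarith
  obtain ⟨hEne, hEc, φ, hφsim, hφdec, hφdis⟩ := hE
  obtain ⟨hFne, hFc, ψ, hψsim, hψdec, hψdis⟩ := hF
  have DSE : LipRpowAux.DS ρ φ E := ⟨hρ0, hρ1, hφsim, hEne, hEc, hφdec, hφdis⟩
  have DSF : LipRpowAux.DS τ ψ F := ⟨hτ0, hτ1, hψsim, hFne, hFc, hψdec, hψdis⟩
  obtain ⟨f, C, hC, hbij, hlip⟩ := hEF
  have hn : 2 ≤ n := by
    obtain ⟨u, hu, v, hv, huv⟩ := LipRpowAux.exists_pair DSE hm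
    refine LipRpowAux.two_le DSF ⟨f u, hbij.1 hu, f v, hbij.1 hv, ?_⟩
    exact fun he => huv (hbij.2.1 hu hv he)
  haveI : Nonempty (Fin m) := ⟨⟨0, by omega⟩⟩
  haveI : Nonempty (Fin n) := ⟨⟨0, by omega⟩⟩
  have hτs : ∑ j, τ j ^ s ≤ 1 := by
    by_contra hgt
    push_neg at hgt
    have hsd : s < (d:ℝ) := by
      by_contra hds
      push_neg at hds
      have h2 : ∑ j, ρ j ^ s ≤ ∑ j, ρ j ^ (d:ℝ) :=
        Finset.sum_le_sum fun j _ =>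
          Real.rpow_le_rpow_of_exponent_ge (hρ0 j) (hρ1 j).le hds
      have h3 : ∑ j, ρ j ^ (d:ℝ) = ∑ j, ρ j ^ d :=
        Finset.sum_congr rfl fun j _ => Real.rpow_natCast _ _
      rw [hdim, h3] at h2
      linarith [hρ.2]
    set G : ℝ → ℝ := fun u => ∑ j, τ j ^ u with hG
    have hGcont : Continuous G := by
      apply continuous_finset_sum
      intro j _
      have hcont : Continuous fun u : ℝ => Real.exp (Real.log (τ j) * u) :=
        Real.continuous_exp.comp (continuous_const.mul continuous_id)
      exact hcont.congr fun u => (Real.rpow_def_of_pos (hτ0 j) u).symm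
    have hGd : G d < 1 := by
      have h3 : G d = ∑ j, τ j ^ d := Finset.sum_congr rfl fun j _ => Real.rpow_natCast _ _
      rw [h3]; exact hτ.2
    have hmem : (1:ℝ) ∈ Set.Icc (G d) (G s) := ⟨hGd.le, hgt.le⟩
    obtain ⟨t, htmem, htG⟩ := intermediate_value_Icc' hsd.le hGcont.continuousOn hmem
    have hst : s < t := by
      rcases lt_or_eq_of_le htmem.1 with h | h
      · exact h
      · exfalso
        rw [← h] at htG
        have : G s = ∑ j, τ j ^ s := rfl
        rw [this] at htG
        linarith
    exact LipRpowAux.dim_compare DSE DSF hm hC hbij hlip hs hst hdim htG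
  have hmne : (Finset.univ : Finset (Fin m)).Nonempty := Finset.univ_nonempty
  have hnne : (Finset.univ : Finset (Fin n)).Nonempty := Finset.univ_nonempty
  have hρr : ∑ j, ρ j ^ r < 1 := by
    have h1 : ∑ j, ρ j ^ r < ∑ j, ρ j ^ s :=
      Finset.sum_lt_sum_of_nonempty hmne fun j _ =>
        Real.rpow_lt_rpow_of_exponent_gt (hρ0 j) (hρ1 j) hrs
    rwa [hdim] at h1
  have hτr : ∑ j, τ j ^ r < 1 := by
    have h1 : ∑ j, τ j ^ r < ∑ j, τ j ^ s :=
      Finset.sum_lt_sum_of_nonempty hnne fun j _ =>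
        Real.rpow_lt_rpow_of_exponent_gt (hτ0 j) (hτ1 j) hrs
    linarith
  have hcvρ : IsContractionVector d m (fun j => ρ j ^ r) := by
    constructor
    · intro j
      exact ⟨Real.rpow_pos_of_pos (hρ0 j) r, Real.rpow_lt_one (hρ0 j).le (hρ1 j) hr0⟩
    · have h1 : ∀ j : Fin m, (ρ j ^ r) ^ d ≤ ρ j ^ r := by
        intro j
        have hle1 : ρ j ^ r ≤ 1 := (Real.rpow_lt_one (hρ0 j).le (hρ1 j) hr0).le
        have hpos : 0 < ρ j ^ r := Real.rpow_pos_of_pos (hρ0 j) r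
        calc (ρ j ^ r) ^ d ≤ (ρ j ^ r) ^ 1 := pow_le_pow_of_le_one hpos.le hle1 hd
          _ = ρ j ^ r := pow_one _
      calc ∑ j : Fin m, (ρ j ^ r) ^ d ≤ ∑ j, ρ j ^ r := Finset.sum_le_sum fun j _ => h1 j
        _ < 1 := hρr
  have hcvτ : IsContractionVector d n (fun j => τ j ^ r) := by
    constructor
    · intro j
      exact ⟨Real.rpow_pos_of_pos (hτ0 j) r, Real.rpow_lt_one (hτ0 j).le (hτ1 j) hr0⟩
    · have h1 : ∀ j : Fin n, (τ j ^ r) ^ d ≤ τ j ^ r := by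
        intro j
        have hle1 : τ j ^ r ≤ 1 := (Real.rpow_lt_one (hτ0 j).le (hτ1 j) hr0).le
        have hpos : 0 < τ j ^ r := Real.rpow_pos_of_pos (hτ0 j) r
        calc (τ j ^ r) ^ d ≤ (τ j ^ r) ^ 1 := pow_le_pow_of_le_one hpos.le hle1 hd
          _ = τ j ^ r := pow_one _
      calc ∑ j : Fin n, (τ j ^ r) ^ d ≤ ∑ j, τ j ^ r := Finset.sum_le_sum fun j _ => h1 j
        _ < 1 := hτr
  refine ⟨hcvρ, hcvτ, ?_⟩
  intro E' F' hE' hF'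
  obtain ⟨hE'ne, hE'c, φ', hφ'sim, hφ'dec, hφ'dis⟩ := hE'
  obtain ⟨hF'ne, hF'c, ψ', hψ'sim, hψ'dec, hψ'dis⟩ := hF'
  have DSE' : LipRpowAux.DS (fun j => ρ j ^ r) φ' E' :=
    ⟨fun j => Real.rpow_pos_of_pos (hρ0 j) r,
     fun j => Real.rpow_lt_one (hρ0 j).le (hρ1 j) hr0,
     hφ'sim, hE'ne, hE'c, hφ'dec, hφ'dis⟩
  have DSF' : LipRpowAux.DS (fun j => τ j ^ r) ψ' F' :=
    ⟨fun j => Real.rpow_pos_of_pos (hτ0 j) r,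
     fun j => Real.rpow_lt_one (hτ0 j).le (hτ1 j) hr0,
     hψ'sim, hF'ne, hF'c, hψ'dec, hψ'dis⟩
  obtain ⟨g, Cg, h1, h2, h3⟩ :=
    LipRpowAux.main_equiv hr0 DSE DSF DSE' DSF' hm hn hC hbij hlip
  exact ⟨g, Cg, h1, h2, h3⟩
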